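/- Let H be a real inner product space, u* ∈ H, and let D ⊆ H contain 0 and be closed under scalar multiplication. Let k ≥ 2 be a natural number and let u_1, u_2, …, u_k ∈ D. Write s_j = ∑_{i=1}^j u_i for the partial sums, and suppose that for every 2 ≤ j ≤ k, the partial sum s_j is an optimal approximation of u* in the translated set s_{j−1} + D = {s_{j−1} + w : w ∈ D}. If moreover u_j ≠ 0 for every 2 ≤ j ≤ k, then the sequence of errors j ↦ ‖s_j − u*‖, for j = 1,…,k, is strictly decreasing. -/

import Mathlib

open Finset in
lemma stmt_9_ortho {H : Type*} [NormedAddCommGroup H] [InnerProductSpace ℝ H]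
    (a v : H) (hv : v ≠ 0) (h : ∀ s : ℝ, ‖a‖ ≤ ‖a + s • v‖) :
    inner ℝ a v = (0 : ℝ) := by
  by_contra hne
  set s : ℝ := -(inner ℝ a v) / ‖v‖ ^ 2 with hs
  have hv2 : (0:ℝ) < ‖v‖ ^ 2 := by
    have := norm_pos_iff.mpr hv
    positivity
  have h1 := h s
  have h2 : ‖a‖ ^ 2 ≤ ‖a + s • v‖ ^ 2 := by
    apply sq_le_sq' _ h1
    nlinarith [norm_nonneg a, norm_nonneg (a + s • v)]
  have hexp : ‖a + s • v‖ ^ 2 = ‖a‖ ^ 2 + 2 * s * inner ℝ a v + s ^ 2 * ‖v‖ ^ 2 := by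
    rw [norm_add_sq_real, norm_smul, real_inner_smul_right, mul_pow, Real.norm_eq_abs, sq_abs]
    ring
  rw [hexp, hs] at h2
  have : (inner ℝ a v : ℝ) ^ 2 ≤ 0 := by
    have hexp2 : ‖a‖ ^ 2 + 2 * (-(inner ℝ a v) / ‖v‖ ^ 2) * inner ℝ a v
        + (-(inner ℝ a v) / ‖v‖ ^ 2) ^ 2 * ‖v‖ ^ 2
        = ‖a‖ ^ 2 - (inner ℝ a v : ℝ) ^ 2 / ‖v‖ ^ 2 := by
      field_simp; ring
    rw [hexp2] at h2
    have h3 : (inner ℝ a v : ℝ) ^ 2 / ‖v‖ ^ 2 ≤ 0 := by linarith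
    have := (div_le_iff₀ hv2).mp h3
    linarith
  have hpos : (0:ℝ) < (inner ℝ a v : ℝ) ^ 2 := by positivity
  linarith

lemma stmt_9_step {H : Type*} [NormedAddCommGroup H] [InnerProductSpace ℝ H]
    (a v : H) (hv : v ≠ 0) (h : ∀ s : ℝ, ‖a‖ ≤ ‖a + s • v‖) :
    ‖a‖ < ‖a - v‖ := by
  have horth := stmt_9_ortho a v hv h
  have hsq : ‖a - v‖ ^ 2 = ‖a‖ ^ 2 + ‖v‖ ^ 2 := by
    rw [norm_sub_sq_real, horth]
    ring
  have hv2 : (0:ℝ) < ‖v‖ ^ 2 := by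
    have := norm_pos_iff.mpr hv
    positivity
  nlinarith [norm_nonneg a, norm_nonneg (a - v)]



/-- Theorem 2(ii): under the hypotheses of Theorem 2(i), if moreover `u j ≠ 0` for all
`2 ≤ j ≤ k`, then the errors `‖s j − ustar‖` are strictly decreasing. -/
theorem stmt_9 {H : Type*} [NormedAddCommGroup H] [InnerProductSpace ℝ H]
    (ustar : H) (D : Set H) (hD0 : (0 : H) ∈ D)
    (hD : ∀ (c : ℝ), ∀ w ∈ D, c • w ∈ D)
    (k : ℕ) (hk : 2 ≤ k) (u : ℕ → H)
    (huD : ∀ i : ℕ, 1 ≤ i → i ≤ k → u i ∈ D)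
    (hopt : ∀ j : ℕ, 2 ≤ j → j ≤ k →
      (∑ i ∈ Finset.Icc 1 j, u i) ∈
        {v : H | ∃ w ∈ D, v = (∑ i ∈ Finset.Icc 1 (j - 1), u i) + w} ∧
      ∀ v ∈ {v : H | ∃ w ∈ D, v = (∑ i ∈ Finset.Icc 1 (j - 1), u i) + w},
        ‖(∑ i ∈ Finset.Icc 1 j, u i) - ustar‖ ≤ ‖v - ustar‖)
    (hne : ∀ j : ℕ, 2 ≤ j → j ≤ k → u j ≠ 0) :
    ∀ j₁ j₂ : ℕ, 1 ≤ j₁ → j₁ < j₂ → j₂ ≤ k →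
      ‖(∑ i ∈ Finset.Icc 1 j₂, u i) - ustar‖ < ‖(∑ i ∈ Finset.Icc 1 j₁, u i) - ustar‖ := by
  set S : ℕ → H := fun j => ∑ i ∈ Finset.Icc 1 j, u i with hS
  have hstep : ∀ j : ℕ, 2 ≤ j → j ≤ k → ‖S j - ustar‖ < ‖S (j - 1) - ustar‖ := by
    intro j hj2 hjk
    have hSj : S j = S (j - 1) + u j := by
      have : j = (j - 1) + 1 := (Nat.succ_pred_eq_of_pos (by omega)).symm
      simp only [hS]
      conv_lhs => rw [this, Finset.sum_Icc_succ_top (show 1 ≤ j - 1 + 1 by omega)]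
      rw [← this]
    have hopt' := (hopt j hj2 hjk).2
    have key : ∀ s : ℝ, ‖S j - ustar‖ ≤ ‖(S j - ustar) + s • u j‖ := by
      intro s
      have hw : (1 + s) • u j ∈ D := hD _ _ (huD j (by omega) hjk)
      have := hopt' (S (j - 1) + (1 + s) • u j) ⟨(1 + s) • u j, hw, rfl⟩
      have heq : S (j - 1) + (1 + s) • u j - ustar = (S j - ustar) + s • u j := by
        rw [hSj]; rw [add_smul, one_smul]; abel
      rw [heq] at this
      exact this
    have hlt := stmt_9_step (S j - ustar) (u j) (hne j hj2 hjk) key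
    have heq2 : S j - ustar - u j = S (j - 1) - ustar := by
      rw [hSj]; abel
    rwa [heq2] at hlt
  intro j₁ j₂ h1 h12 h2k
  induction j₂ with
  | zero => omega
  | succ n ih =>
    have hstepn : ‖S (n + 1) - ustar‖ < ‖S n - ustar‖ := by
      have := hstep (n + 1) (by omega) h2k
      simpa using this
    rcases eq_or_lt_of_le (Nat.lt_succ_iff.mp h12) with h | h
    · rw [h]; exact hstepn
    · exact hstepn.trans (ih h (by omega))
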